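/- For a noncrossing linked partition π of {1,...,n}, every element of {1,...,n} belongs to either exactly one or exactly two blocks of π. -/
import Mathlib


attribute [local instance] Classical.propDecidable

noncomputable section

/-- Two subsets `E`, `F` of `{1,...,n}` are crossing if there exist
`i₁ < j₁ < i₂ < j₂` with `i₁, i₂ ∈ E` and `j₁, j₂ ∈ F`. -/
def Crossing (E F : Finset ℕ) : Prop :=
  ∃ i₁ ∈ E, ∃ i₂ ∈ E, ∃ j₁ ∈ F, ∃ j₂ ∈ F, i₁ < j₁ ∧ j₁ < i₂ ∧ i₂ < j₂

/-- `i` is the minimum element of `E`. -/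
def IsMinOf (i : ℕ) (E : Finset ℕ) : Prop := i ∈ E ∧ ∀ j ∈ E, i ≤ j

/-- `E` and `F` are nearly disjoint. -/
def NearlyDisjoint (E F : Finset ℕ) : Prop :=
  ∀ i ∈ E ∩ F,
    (IsMinOf i E ∧ 1 < E.card ∧ ¬ IsMinOf i F) ∨
    (¬ IsMinOf i E ∧ IsMinOf i F ∧ 1 < F.card)

/-- `π` is a noncrossing linked partition of `{1,...,n}`. -/
def IsNCL (n : ℕ) (π : Finset (Finset ℕ)) : Prop :=
  (∀ E ∈ π, E.Nonempty) ∧ π.biUnion id = Finset.Icc 1 n ∧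
    ∀ E ∈ π, ∀ F ∈ π, E ≠ F → ¬ Crossing E F ∧ NearlyDisjoint E F

/-- `π` is a noncrossing partition of `{1,...,n}`. -/
def IsNC (n : ℕ) (π : Finset (Finset ℕ)) : Prop :=
  (∀ E ∈ π, E.Nonempty) ∧ π.biUnion id = Finset.Icc 1 n ∧
    ∀ E ∈ π, ∀ F ∈ π, E ≠ F → Disjoint E F ∧ ¬ Crossing E F

/-- The order on (linked) partitions: every block of `π` is contained in a block of `σ`. -/
def NCLle (π σ : Finset (Finset ℕ)) : Prop := ∀ E ∈ π, ∃ E' ∈ σ, E ⊆ E'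

/-- The finset of all noncrossing linked partitions of `{1,...,n}`. -/
def NCLset (n : ℕ) : Finset (Finset (Finset ℕ)) :=
  ((Finset.Icc 1 n).powerset.powerset).filter (IsNCL n)

/-- The finset of all noncrossing partitions of `{1,...,n}`. -/
def NCset (n : ℕ) : Finset (Finset (Finset ℕ)) :=
  ((Finset.Icc 1 n).powerset.powerset).filter (IsNC n)

/-- Every element of `{1,...,n}` belongs to either exactly one or exactly two
blocks of a noncrossing linked partition `π` of `{1,...,n}`. -/
theorem NCL_singly_or_doubly_covered {n : ℕ} {π : Finset (Finset ℕ)}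
    (hπ : IsNCL n π) {ℓ : ℕ} (hℓ : ℓ ∈ Finset.Icc 1 n) :
    (π.filter (fun E => ℓ ∈ E)).card = 1 ∨ (π.filter (fun E => ℓ ∈ E)).card = 2 := by
  obtain ⟨hne, hun, hpair⟩ := hπ
  set S := π.filter (fun E => ℓ ∈ E) with hS
  -- key: for distinct blocks containing ℓ, exactly one has ℓ as min
  have key : ∀ X ∈ S, ∀ Y ∈ S, X ≠ Y → (IsMinOf ℓ X ↔ ¬ IsMinOf ℓ Y) := by
    intro X hX Y hY hXY
    simp only [hS, Finset.mem_filter] at hX hY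
    have hnd := (hpair X hX.1 Y hY.1 hXY).2
    have := hnd ℓ (Finset.mem_inter.2 ⟨hX.2, hY.2⟩)
    tauto
  have h1 : 1 ≤ S.card := by
    have : ℓ ∈ π.biUnion id := hun ▸ hℓ
    obtain ⟨E, hE, hℓE⟩ := Finset.mem_biUnion.1 this
    exact Finset.card_pos.2 ⟨E, Finset.mem_filter.2 ⟨hE, hℓE⟩⟩
  have h2 : S.card ≤ 2 := by
    by_contra h
    push_neg at h
    obtain ⟨a, b, c, ha, hb, hc, hab, hac, hbc⟩ := Finset.two_lt_card_iff.1 h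
    have k1 := key a ha b hb hab
    have k2 := key a ha c hc hac
    have k3 := key b hb c hc hbc
    tauto
  omega
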